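/- Let h be a multiplicative function with 0 ≤ h(d) ≤ d for all positive integers d. Let r be a positive integer and let R be its largest squarefree divisor. Then Σ_{d | R} f_r(d) · (h(d)/d) · Π_{p | R/d} (1 − h(p)/p) = H(r), where the sum is over the positive divisors d of R and the product is over the primes p dividing R/d. -/
import Mathlib


open Finset
open scoped Classical

noncomputable section

/-- The multiplicative function `H` with
`H(p^α) = (h(p)/p)(1 − h(p)/p)^α + (−h(p)/p)^α (1 − h(p)/p)`. -/
def Hfun (h : ℕ → ℝ) (n : ℕ) : ℝ :=
  n.factorization.prod fun p α =>
    h p / p * (1 - h p / p) ^ α + (-(h p / p)) ^ α * (1 - h p / p)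

/-- The multiplicative function `J(·, s)` with `J(p^α, s) = (1 − h(p)/p)^α − (−h(p)/p)^α`
if `p ∣ s`, and `J(p^α, s) = (−h(p)/p)^α` if `p ∤ s`. -/
def Jfun (h : ℕ → ℝ) (r s : ℕ) : ℝ :=
  r.factorization.prod fun p α =>
    if p ∣ s then (1 - h p / p) ^ α - (-(h p / p)) ^ α else (-(h p / p)) ^ α

/-- `f_r(a)`: the completely multiplicative function of `r` with
`f_p(a) = 1 − h(p)/p` if `p ∣ a` and `f_p(a) = −h(p)/p` if `p ∤ a`. -/
def ffun (h : ℕ → ℝ) (r a : ℕ) : ℝ :=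
  r.factorization.prod fun p α => (if p ∣ a then 1 - h p / p else -(h p / p)) ^ α

/-- A positive integer is squarefull if `p² ∣ n` for every prime `p ∣ n`. -/
def Squarefull (n : ℕ) : Prop := ∀ p : ℕ, p.Prime → p ∣ n → p ^ 2 ∣ n

/-- The largest squarefree divisor (radical) of `n`. -/
def rad (n : ℕ) : ℕ := ∏ p ∈ n.primeFactors, p


lemma h_prod_primes (h : ℕ → ℝ) (h_one : h 1 = 1)
    (h_mult : ∀ m n : ℕ, Nat.Coprime m n → h (m * n) = h m * h n)
    (S : Finset ℕ) (hS : ∀ p ∈ S, p.Prime) : h (∏ p ∈ S, p) = ∏ p ∈ S, h p := by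
  induction S using Finset.induction_on with
  | empty => simpa
  | @insert a s ha ih =>
    have hap : a.Prime := hS a (mem_insert_self _ _)
    have hcop : Nat.Coprime a (∏ p ∈ s, p) :=
      Nat.Coprime.prod_right fun q hq =>
        (Nat.coprime_primes hap (hS q (mem_insert_of_mem hq))).mpr fun e => ha (e ▸ hq)
    rw [prod_insert ha, prod_insert ha, h_mult _ _ hcop,
      ih fun p hp => hS p (mem_insert_of_mem hp)]

lemma squarefree_prod_primes (S : Finset ℕ) (hS : ∀ p ∈ S, p.Prime) :
    Squarefree (∏ p ∈ S, p) := by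
  induction S using Finset.induction_on with
  | empty => simpa using squarefree_one
  | @insert a s ha ih =>
    have hap : a.Prime := hS a (mem_insert_self _ _)
    have hcop : Nat.Coprime a (∏ p ∈ s, p) :=
      Nat.Coprime.prod_right fun q hq =>
        (Nat.coprime_primes hap (hS q (mem_insert_of_mem hq))).mpr fun e => ha (e ▸ hq)
    rw [prod_insert ha, Nat.squarefree_mul hcop]
    exact ⟨hap.squarefree, ih fun p hp => hS p (mem_insert_of_mem hp)⟩

/-- **Lemma 4.4, first identity**: with `R` the largest squarefree divisor of `r`,
`∑_{d ∣ R} f_r(d) (h(d)/d) ∏_{p ∣ R/d} (1 − h(p)/p) = H(r)`. -/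
theorem H_divisor_identity (h : ℕ → ℝ) (h_one : h 1 = 1)
    (h_mult : ∀ m n : ℕ, Nat.Coprime m n → h (m * n) = h m * h n)
    (h_nonneg : ∀ d : ℕ, 0 < d → 0 ≤ h d) (h_le : ∀ d : ℕ, 0 < d → h d ≤ (d : ℝ))
    (r : ℕ) (hr : 0 < r) :
    ∑ d ∈ (rad r).divisors,
      ffun h r d * (h d / d) * ∏ p ∈ (rad r / d).primeFactors, (1 - h p / p)
    = Hfun h r := by
  classical
  set P := r.primeFactors with hP
  have hPprime : ∀ p ∈ P, p.Prime := fun p hp => Nat.prime_of_mem_primeFactors hp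
  have hRsq : Squarefree (rad r) := squarefree_prod_primes P hPprime
  have hRP : (rad r).primeFactors = P := Nat.primeFactors_prod hPprime
  have hsupp : r.factorization.support = P := Nat.support_factorization r
  have hH : Hfun h r = ∑ t ∈ P.powerset,
      (∏ p ∈ t, (h p / p * (1 - h p / p) ^ r.factorization p)) *
      ∏ p ∈ P \ t, ((-(h p / p)) ^ r.factorization p * (1 - h p / p)) := by
    rw [Hfun, Finsupp.prod, hsupp, Finset.prod_add]
  rw [hH]
  have key : ∀ S ∈ P.powerset,
      ffun h r (∏ p ∈ S, p) * (h (∏ p ∈ S, p) / (∏ p ∈ S, p) : ℝ) *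
        ∏ p ∈ (rad r / ∏ p ∈ S, p).primeFactors, (1 - h p / p)
      = (∏ p ∈ S, (h p / p * (1 - h p / p) ^ r.factorization p)) *
        ∏ p ∈ P \ S, ((-(h p / p)) ^ r.factorization p * (1 - h p / p)) := by
    intro S hSmem
    have hS : S ⊆ P := mem_powerset.mp hSmem
    have hSp : ∀ p ∈ S, p.Prime := fun p hp => hPprime p (hS hp)
    have hdvd_iff : ∀ p ∈ P, (p ∣ ∏ q ∈ S, q ↔ p ∈ S) := by
      intro p hp
      constructor
      · intro hpd
        obtain ⟨q, hq, hpq⟩ := ((hPprime p hp).prime.dvd_finset_prod_iff _).mp hpd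
        rwa [(Nat.prime_dvd_prime_iff_eq (hPprime p hp) (hSp q hq)).mp hpq]
      · exact fun hpS => dvd_prod_of_mem _ hpS
    have hff : ffun h r (∏ p ∈ S, p) =
        (∏ p ∈ S, (1 - h p / p) ^ r.factorization p) *
        ∏ p ∈ P \ S, (-(h p / p)) ^ r.factorization p := by
      rw [ffun, Finsupp.prod, hsupp, ← Finset.prod_sdiff hS, mul_comm]
      congr 1
      · exact prod_congr rfl fun p hp => by rw [if_pos ((hdvd_iff p (hS hp)).mpr hp)]
      · exact prod_congr rfl fun p hp => by
          rw [if_neg fun hc => (mem_sdiff.mp hp).2 ((hdvd_iff p (mem_sdiff.mp hp).1).mp hc)]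
    have hhd : (h (∏ p ∈ S, p) / (∏ p ∈ S, p) : ℝ) = ∏ p ∈ S, (h p / p) := by
      rw [h_prod_primes h h_one h_mult S hSp, Nat.cast_prod, ← prod_div_distrib]
    have hquo : (rad r / ∏ p ∈ S, p).primeFactors = P \ S := by
      have h1 := Nat.prod_primeFactors_sdiff_of_squarefree hRsq (t := S) (hRP ▸ hS)
      rw [hRP] at h1
      rw [← h1, Nat.primeFactors_prod fun p hp => hPprime p (mem_sdiff.mp hp).1]
    rw [hff, hhd, hquo, prod_mul_distrib, prod_mul_distrib]
    ring
  refine (Finset.sum_nbij' (i := fun S => ∏ p ∈ S, p) (j := fun d => d.primeFactors)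
    ?_ ?_ ?_ ?_ fun S hS => (key S hS).symm).symm
  · intro S hSmem
    exact Nat.mem_divisors.mpr
      ⟨Finset.prod_dvd_prod_of_subset _ _ _ (mem_powerset.mp hSmem), hRsq.ne_zero⟩
  · intro d hd
    exact mem_powerset.mpr (hRP ▸ Nat.primeFactors_mono (Nat.dvd_of_mem_divisors hd) hRsq.ne_zero)
  · intro S hSmem
    exact Nat.primeFactors_prod fun p hp => hPprime p (mem_powerset.mp hSmem hp)
  · intro d hd
    exact Nat.prod_primeFactors_of_squarefree
      (hRsq.squarefree_of_dvd (Nat.dvd_of_mem_divisors hd))
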